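/- Let C ⊆ ℝ² be the interior of a convex body and let A ⊆ ℝ² be a compact set with 2C ⊆ A (where 2C = {2c : c ∈ C}). Let X be a set of n ≥ 2 independent points, each uniformly distributed in A, and let t > 0. Then there is a constant γ > 0, depending only on A, C and t, such that with probability at least 1 − n^{−t}, |{X ∩ (x+C) : x ∈ ℝ², x+C ⊆ A, X ∩ bd(x+C) = ∅}| ≥ γ·(n/log n)². -/

import Mathlib

set_option maxHeartbeats 1000000

open MeasureTheory
open scoped ENNReal
open scoped Pointwise

/-- The translate `x + C` of a set `C ⊆ ℝ²` by a vector `x`. -/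
def translateSet (x : ℝ × ℝ) (C : Set (ℝ × ℝ)) : Set (ℝ × ℝ) :=
  (fun y => x + y) '' C

/-- The uniform probability distribution on a compact set `A ⊆ ℝ²`:
`B ↦ area (B ∩ A) / area A`. -/
noncomputable def uniformOn (A : Set (ℝ × ℝ)) : Measure (ℝ × ℝ) :=
  (volume A)⁻¹ • volume.restrict A

/-- The number of subsets of the point set `S ⊆ ℝ²` induced by translates of `C` that
are contained in `A` and whose boundary misses `S`. -/
noncomputable def rangeCountIn (C A S : Set (ℝ × ℝ)) : ℕ :=
  Set.ncard {T : Set (ℝ × ℝ) | ∃ x : ℝ × ℝ, translateSet x C ⊆ A ∧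
    S ∩ frontier (translateSet x C) = ∅ ∧ T = S ∩ translateSet x C}



lemma vadd_eq_preimage (x : ℝ×ℝ) (C : Set (ℝ×ℝ)) : x +ᵥ C = (fun w => w - x) ⁻¹' C := by
  ext w
  simp [Set.mem_vadd_set_iff_neg_vadd_mem, sub_eq_neg_add]

lemma slab_lower {C' : Set (ℝ×ℝ)} (hconv : Convex ℝ C') (hmeas : MeasurableSet C')
    (hbdd : Bornology.IsBounded C') {q : ℝ×ℝ} {R h : ℝ} (hR : 0 < R) (hh : 0 < h)
    (hball : ∀ w : ℝ×ℝ, (w.1-q.1)^2+(w.2-q.2)^2 < R^2 → w ∈ C') :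
    ENNReal.ofReal (R * min h R) ≤ volume (C' \ ((((0:ℝ),h) : ℝ×ℝ) +ᵥ C')) := by
  obtain ⟨M, hM⟩ := (isBounded_iff_forall_norm_le).1 hbdd
  set S := C' \ ((((0:ℝ),h) : ℝ×ℝ) +ᵥ C') with hSdef
  have hSmeas : MeasurableSet S := by
    refine hmeas.diff ?_
    rw [vadd_eq_preimage]
    exact hmeas.preimage (by fun_prop)
  have hmemshift : ∀ x y : ℝ, ((x,y) : ℝ×ℝ) ∈ ((((0:ℝ),h) : ℝ×ℝ) +ᵥ C') ↔ ((x, y-h) : ℝ×ℝ) ∈ C' := by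
    intro x y
    rw [vadd_eq_preimage]
    simp [Prod.ext_iff]
  have key : ∀ x ∈ Set.Ioo (q.1 - R/2) (q.1 + R/2),
      ENNReal.ofReal (min h R) ≤ volume {y : ℝ | ((x, y) : ℝ×ℝ) ∈ S} := by
    intro x hx
    simp only [Set.mem_Ioo] at hx
    set J := {y : ℝ | ((x, y) : ℝ×ℝ) ∈ C'} with hJdef
    have hJconv : Convex ℝ J := by
      intro y1 h1 y2 h2 a b ha hb hab
      have h3 := hconv h1 h2 ha hb hab
      have : a • ((x, y1) : ℝ×ℝ) + b • ((x, y2) : ℝ×ℝ) = ((x, a • y1 + b • y2) : ℝ×ℝ) := by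
        have hx' : a * x + b * x = x := by rw [← add_mul, hab, one_mul]
        simp [Prod.ext_iff, smul_eq_mul, hx']
      rwa [this] at h3
    have hsub : Set.Ioo (q.2 - 3*R/4) (q.2 + 3*R/4) ⊆ J := by
      intro y hy
      simp only [Set.mem_Ioo] at hy
      exact hball (x, y) (by nlinarith [hy.1, hy.2, hx.1, hx.2])
    have hbddJ : BddBelow J := by
      refine ⟨-M, fun y hy => ?_⟩
      have h1 := hM (x,y) hy
      have h2 : ‖y‖ ≤ ‖((x,y) : ℝ×ℝ)‖ := by
        simpa using norm_snd_le ((x,y) : ℝ×ℝ)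
      have := abs_le.1 (le_trans h2 h1)
      linarith [this.1]
    set a := sInf J with hadef
    have hcJ : q.2 + R/2 ∈ J := hsub ⟨by linarith, by linarith⟩
    have haq : a ≤ q.2 - R/2 := csInf_le hbddJ (hsub ⟨by linarith, by linarith⟩)
    have hIoo : Set.Ioo a (min (a+h) (q.2 + R/2)) ⊆ {y : ℝ | ((x, y) : ℝ×ℝ) ∈ S} := by
      intro y hy
      obtain ⟨hy1, hy2⟩ := hy
      have hyc : y < q.2 + R/2 := lt_of_lt_of_le hy2 (min_le_right _ _)
      have hyJ : y ∈ J := by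
        obtain ⟨j, hjJ, hjy⟩ := exists_lt_of_csInf_lt ⟨_, hcJ⟩ hy1
        exact hJconv.ordConnected.out hjJ hcJ ⟨le_of_lt hjy, le_of_lt hyc⟩
      refine ⟨hyJ, fun hmem => ?_⟩
      have : ((x, y - h) : ℝ×ℝ) ∈ C' := (hmemshift x y).1 hmem
      have : a ≤ y - h := csInf_le hbddJ this
      have : a + h ≤ y := by linarith
      exact absurd (lt_of_lt_of_le hy2 (min_le_left _ _)) (not_lt.2 this)
    calc ENNReal.ofReal (min h R) ≤ volume (Set.Ioo a (min (a+h) (q.2 + R/2))) := by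
          rw [Real.volume_Ioo]
          refine ENNReal.ofReal_le_ofReal ?_
          have : min (a+h) (q.2+R/2) - a = min h (q.2 + R/2 - a) := by
            rw [← min_sub_sub_right]
            congr 1
            ring
          rw [this]
          exact min_le_min le_rfl (by linarith)
      _ ≤ volume {y : ℝ | ((x, y) : ℝ×ℝ) ∈ S} := measure_mono hIoo
  have hvol : volume S = ∫⁻ x, volume {y : ℝ | ((x, y) : ℝ×ℝ) ∈ S} := by
    rw [Measure.volume_eq_prod, Measure.prod_apply hSmeas]
    rfl
  have hint : ENNReal.ofReal (min h R) * volume (Set.Ioo (q.1 - R/2) (q.1 + R/2))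
      ≤ ∫⁻ x, volume {y : ℝ | ((x, y) : ℝ×ℝ) ∈ S} := by
    rw [← lintegral_indicator_const measurableSet_Ioo]
    refine lintegral_mono fun x => ?_
    by_cases hx : x ∈ Set.Ioo (q.1 - R/2) (q.1 + R/2)
    · simpa [Set.indicator_of_mem hx] using key x hx
    · simp [Set.indicator_of_notMem hx]
  rw [hvol]
  refine le_trans ?_ hint
  rw [Real.volume_Ioo, ← ENNReal.ofReal_mul (by positivity)]
  refine ENNReal.ofReal_le_ofReal ?_
  have : q.1 + R/2 - (q.1 - R/2) = R := by ring
  rw [this]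
  ring_nf
  exact le_rfl

/-- scaled rotation sending `v` to `(0, ‖v‖²)`. -/
noncomputable def rotL (v : ℝ×ℝ) : (ℝ×ℝ) →ₗ[ℝ] (ℝ×ℝ) where
  toFun w := (v.2*w.1 - v.1*w.2, v.1*w.1 + v.2*w.2)
  map_add' w1 w2 := by simp [Prod.ext_iff]; constructor <;> ring
  map_smul' c w := by simp [Prod.ext_iff, smul_eq_mul]; constructor <;> ring

lemma rotL_det (v : ℝ×ℝ) : LinearMap.det (rotL v) = v.1^2 + v.2^2 := by
  have := LinearMap.det_toMatrix (Module.Basis.finTwoProd ℝ) (rotL v)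
  rw [← this, Matrix.det_fin_two]
  simp [LinearMap.toMatrix_apply, rotL, Module.Basis.finTwoProd]
  ring

lemma rotL_inj {v : ℝ×ℝ} (hv : v ≠ 0) : Function.Injective (rotL v) := by
  have hL : v.1^2 + v.2^2 ≠ 0 := by
    intro hcon
    apply hv
    have h1 : v.1 = 0 := by nlinarith [sq_nonneg v.1, sq_nonneg v.2]
    have h2 : v.2 = 0 := by nlinarith [sq_nonneg v.1, sq_nonneg v.2]
    exact Prod.ext h1 h2
  intro w1 w2 heq
  simp only [rotL, LinearMap.coe_mk, AddHom.coe_mk, Prod.ext_iff] at heq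
  obtain ⟨e1, e2⟩ := heq
  have g1 : (v.1^2+v.2^2) * w1.1 = (v.1^2+v.2^2) * w2.1 := by linear_combination v.2 * e1 + v.1 * e2
  have g2 : (v.1^2+v.2^2) * w1.2 = (v.1^2+v.2^2) * w2.2 := by linear_combination (-v.1) * e1 + v.2 * e2
  exact Prod.ext (mul_left_cancel₀ hL g1) (mul_left_cancel₀ hL g2)

lemma diff_lower {C : Set (ℝ×ℝ)} (hconv : Convex ℝ C) (hopen : IsOpen C)
    (hbdd : Bornology.IsBounded C) {p : ℝ×ℝ} {r : ℝ} (hr : 0 < r)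
    (hball : Metric.ball p r ⊆ C) {v : ℝ×ℝ} (hv : v ≠ 0) {l : ℝ} (hl : 0 < l)
    (hlv : l^2 ≤ v.1^2 + v.2^2) (hlr : l ≤ r) :
    ENNReal.ofReal (r * l) ≤ volume (C \ (v +ᵥ C)) := by
  set L := Real.sqrt (v.1^2 + v.2^2) with hLdef
  have hvsq : 0 < v.1^2 + v.2^2 := lt_of_lt_of_le (by positivity) hlv
  have hL : 0 < L := Real.sqrt_pos.2 hvsq
  have hLsq : L^2 = v.1^2 + v.2^2 := Real.sq_sqrt hvsq.le
  have hlL : l ≤ L := by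
    nlinarith [hLsq, hl.le, hL.le]
  set U := rotL v with hUdef
  -- inverse map
  set W : (ℝ×ℝ) → (ℝ×ℝ) := fun w => ((v.2*w.1 + v.1*w.2)/(v.1^2+v.2^2), (-v.1*w.1 + v.2*w.2)/(v.1^2+v.2^2)) with hWdef
  have hWU : ∀ w, W (U w) = w := by
    intro w
    simp only [hWdef, hUdef, rotL, LinearMap.coe_mk, AddHom.coe_mk, Prod.ext_iff]
    constructor <;> field_simp <;> ring
  have hUW : ∀ w, U (W w) = w := by
    intro w
    simp only [hWdef, hUdef, rotL, LinearMap.coe_mk, AddHom.coe_mk, Prod.ext_iff]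
    constructor <;> field_simp <;> ring
  have hWcont : Continuous W := by fun_prop
  have himg : ∀ s : Set (ℝ×ℝ), (U : (ℝ×ℝ) → (ℝ×ℝ)) '' s = W ⁻¹' s := by
    intro s
    ext w
    constructor
    · rintro ⟨u, hu, rfl⟩
      simpa [hWU u] using hu
    · intro hw
      exact ⟨W w, hw, hUW w⟩
  set C' := (U : (ℝ×ℝ) → (ℝ×ℝ)) '' C with hC'def
  have hC'open : IsOpen C' := by rw [hC'def, himg]; exact hopen.preimage hWcont
  have hC'conv : Convex ℝ C' := hconv.linear_image U
  have hC'bdd : Bornology.IsBounded C' := by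
    obtain ⟨M, hM⟩ := isBounded_iff_forall_norm_le.1 hbdd
    refine isBounded_iff_forall_norm_le.2 ⟨(|v.1|+|v.2|) * M + (|v.1|+|v.2|) * M, ?_⟩
    rintro w ⟨u, hu, rfl⟩
    have h1 : |u.1| ≤ M := le_trans (by simpa using norm_fst_le u) (hM u hu)
    have h2 : |u.2| ≤ M := le_trans (by simpa using norm_snd_le u) (hM u hu)
    have hMn : 0 ≤ M := le_trans (abs_nonneg _) h1
    rw [Prod.norm_def]
    simp only [hUdef, rotL, LinearMap.coe_mk, AddHom.coe_mk]
    have b1 : |v.2*u.1| ≤ |v.2| * M := by rw [abs_mul]; exact mul_le_mul_of_nonneg_left h1 (abs_nonneg _)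
    have b2 : |v.1*u.2| ≤ |v.1| * M := by rw [abs_mul]; exact mul_le_mul_of_nonneg_left h2 (abs_nonneg _)
    have b3 : |v.1*u.1| ≤ |v.1| * M := by rw [abs_mul]; exact mul_le_mul_of_nonneg_left h1 (abs_nonneg _)
    have b4 : |v.2*u.2| ≤ |v.2| * M := by rw [abs_mul]; exact mul_le_mul_of_nonneg_left h2 (abs_nonneg _)
    refine max_le ?_ ?_ <;>
      · rw [Real.norm_eq_abs, abs_le]
        constructor <;>
          linarith [neg_abs_le (v.2*u.1), le_abs_self (v.2*u.1), neg_abs_le (v.1*u.2),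
            le_abs_self (v.1*u.2), neg_abs_le (v.1*u.1), le_abs_self (v.1*u.1),
            neg_abs_le (v.2*u.2), le_abs_self (v.2*u.2)]
  have hEball : ∀ w : ℝ×ℝ, (w.1-(U p).1)^2+(w.2-(U p).2)^2 < (r*L)^2 → w ∈ C' := by
    intro w hw
    obtain ⟨u, hUu⟩ : ∃ u : ℝ×ℝ, (U : (ℝ×ℝ)→(ℝ×ℝ)) u = w := ⟨W w, hUW w⟩
    have e1 : v.2*u.1 - v.1*u.2 = w.1 := congrArg Prod.fst hUu
    have e2 : v.1*u.1 + v.2*u.2 = w.2 := congrArg Prod.snd hUu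
    have ep1 : (U p).1 = v.2*p.1 - v.1*p.2 := rfl
    have ep2 : (U p).2 = v.1*p.1 + v.2*p.2 := rfl
    have hid : (w.1-(U p).1)^2+(w.2-(U p).2)^2
        = (v.1^2+v.2^2) * ((u.1-p.1)^2+(u.2-p.2)^2) := by
      rw [← e1, ← e2, ep1, ep2]; ring
    have hd : (u.1-p.1)^2+(u.2-p.2)^2 < r^2 := by
      rw [hid] at hw
      have hrL : (r*L)^2 = (v.1^2+v.2^2) * r^2 := by rw [mul_pow, hLsq]; ring
      rw [hrL] at hw
      exact lt_of_mul_lt_mul_left hw hvsq.le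
    have huC : u ∈ C := by
      apply hball
      rw [Metric.mem_ball, Prod.dist_eq]
      have d1 : dist u.1 p.1 < r := by
        rw [Real.dist_eq, abs_lt]
        constructor <;> nlinarith [sq_nonneg (u.1-p.1), sq_nonneg (u.2-p.2)]
      have d2 : dist u.2 p.2 < r := by
        rw [Real.dist_eq, abs_lt]
        constructor <;> nlinarith [sq_nonneg (u.1-p.1), sq_nonneg (u.2-p.2)]
      exact max_lt d1 d2
    exact hUu ▸ Set.mem_image_of_mem _ huC
  have hslab := slab_lower hC'conv hC'open.measurableSet hC'bdd
    (q := U p) (R := r*L) (h := L^2) (by positivity) (by positivity) hEball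
  have hUv : (U : (ℝ×ℝ)→(ℝ×ℝ)) v = (((0:ℝ), L^2) : ℝ×ℝ) := by
    have : (U : (ℝ×ℝ)→(ℝ×ℝ)) v = (v.2*v.1 - v.1*v.2, v.1*v.1 + v.2*v.2) := rfl
    rw [this, hLsq]
    simp [Prod.ext_iff]
    constructor
    · ring
    · ring
  have himgdiff : (U : (ℝ×ℝ)→(ℝ×ℝ)) '' (C \ (v +ᵥ C)) = C' \ ((((0:ℝ),L^2) : ℝ×ℝ) +ᵥ C') := by
    rw [Set.image_diff (rotL_inj hv)]
    congr 1
    ext w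
    constructor
    · rintro ⟨z, ⟨c, hc, rfl⟩, rfl⟩
      simp only [vadd_eq_add]
      rw [map_add, hUv]
      exact Set.vadd_mem_vadd_set (Set.mem_image_of_mem _ hc)
    · rintro ⟨z, ⟨c, hc, rfl⟩, rfl⟩
      refine ⟨v + c, Set.vadd_mem_vadd_set hc, ?_⟩
      simp only [vadd_eq_add]
      rw [map_add, hUv]
  have hdet : volume ((U : (ℝ×ℝ)→(ℝ×ℝ)) '' (C \ (v +ᵥ C)))
      = ENNReal.ofReal (v.1^2+v.2^2) * volume (C \ (v +ᵥ C)) := by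
    rw [show (U : (ℝ×ℝ)→(ℝ×ℝ)) = (rotL v : (ℝ×ℝ)→ₗ[ℝ](ℝ×ℝ)) from rfl]
    rw [Measure.addHaar_image_linearMap, rotL_det, abs_of_pos hvsq]
  have hmain : ENNReal.ofReal (v.1^2+v.2^2) * ENNReal.ofReal (r*l)
      ≤ ENNReal.ofReal (v.1^2+v.2^2) * volume (C \ (v +ᵥ C)) := by
    rw [← hdet, himgdiff, ← ENNReal.ofReal_mul hvsq.le]
    refine le_trans (ENNReal.ofReal_le_ofReal ?_) hslab
    rcases le_total L r with hc | hc
    · have hmin : min (L^2) (r*L) = L^2 := min_eq_left (by nlinarith [hL.le])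
      rw [hmin]
      calc (v.1^2+v.2^2) * (r*l) = (r*L^2)*l := by rw [← hLsq]; ring
        _ ≤ (r*L^2)*L := mul_le_mul_of_nonneg_left hlL (by positivity)
        _ = r*L*L^2 := by ring
    · have hmin : min (L^2) (r*L) = r*L := min_eq_right (by nlinarith [hL.le])
      rw [hmin]
      calc (v.1^2+v.2^2) * (r*l) = (L^2*r)*l := by rw [← hLsq]; ring
        _ ≤ (L^2*r)*r := mul_le_mul_of_nonneg_left hlr (by positivity)
        _ = r*L*(r*L) := by ring
  exact (ENNReal.mul_le_mul_iff_right (by simp [hvsq]) ENNReal.ofReal_ne_top).1 hmain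


lemma count_lower {n : ℕ} (C A : Set (ℝ×ℝ)) {m : ℕ} (x : Fin m × Fin m → ℝ×ℝ)
    (ω : Fin n → ℝ×ℝ)
    (hxA : ∀ q, translateSet (x q) C ⊆ A)
    (hfr : ∀ q, ∀ i, ω i ∉ frontier (translateSet (x q) C))
    (hdiff : ∀ q q', q ≠ q' → ∃ i, ω i ∈ translateSet (x q) C \ translateSet (x q') C) :
    m*m ≤ rangeCountIn C A (Set.range ω) := by
  classical
  set X := Set.range ω with hXdef
  have hXfin : X.Finite := Set.finite_range ω
  set 𝒯 := {T : Set (ℝ × ℝ) | ∃ y : ℝ × ℝ, translateSet y C ⊆ A ∧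
    X ∩ frontier (translateSet y C) = ∅ ∧ T = X ∩ translateSet y C} with h𝒯def
  have h𝒯sub : 𝒯 ⊆ {T | T ⊆ X} := by
    rintro T ⟨y, -, -, rfl⟩
    exact Set.inter_subset_left
  have h𝒯fin : 𝒯.Finite := (hXfin.finite_subsets).subset h𝒯sub
  set F : Fin m × Fin m → Set (ℝ×ℝ) := fun q => X ∩ translateSet (x q) C with hFdef
  have hmemT : ∀ q, F q ∈ 𝒯 := by
    intro q
    refine ⟨x q, hxA q, ?_, rfl⟩
    rw [Set.eq_empty_iff_forall_notMem]
    rintro z ⟨⟨i, rfl⟩, hz2⟩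
    exact hfr q i hz2
  have hinjF : Function.Injective F := by
    intro q q' hFq
    by_contra hne
    obtain ⟨i, hi1, hi2⟩ := hdiff q q' hne
    have h1 : ω i ∈ F q := ⟨Set.mem_range_self i, hi1⟩
    rw [hFq] at h1
    exact hi2 h1.2
  have h1 : (Set.range F).ncard = m*m := by
    rw [← Set.image_univ, Set.ncard_image_of_injective _ hinjF, Set.ncard_univ,
      Nat.card_eq_fintype_card, Fintype.card_prod, Fintype.card_fin]
  calc m*m = (Set.range F).ncard := h1.symm
    _ ≤ 𝒯.ncard := Set.ncard_le_ncard (by rintro T ⟨q, rfl⟩; exact hmemT q) h𝒯fin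
    _ = rangeCountIn C A X := rfl

lemma uniform_prob {A : Set (ℝ×ℝ)} (h0 : volume A ≠ 0) (htop : volume A ≠ ⊤) :
    IsProbabilityMeasure (uniformOn A) := by
  constructor
  rw [uniformOn, Measure.smul_apply, Measure.restrict_apply_univ, smul_eq_mul,
    ENNReal.inv_mul_cancel h0 htop]

lemma uniform_apply {A : Set (ℝ×ℝ)} {R : Set (ℝ×ℝ)} (hR : MeasurableSet R) :
    uniformOn A R = (volume A)⁻¹ * volume (R ∩ A) := by
  rw [uniformOn, Measure.smul_apply, Measure.restrict_apply hR, smul_eq_mul]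

lemma pi_miss {A : Set (ℝ×ℝ)} (h0 : volume A ≠ 0) (htop : volume A ≠ ⊤) (n : ℕ)
    {R : Set (ℝ×ℝ)} (hR : MeasurableSet R) (hRA : R ⊆ A) {a : ℝ} (ha : 0 ≤ a)
    (haR : ENNReal.ofReal a ≤ volume R) :
    (Measure.pi fun _ : Fin n => uniformOn A) {ω : Fin n → ℝ×ℝ | ∀ i, ω i ∉ R}
      ≤ ENNReal.ofReal (Real.exp (-(a / (volume A).toReal)) ^ n) := by
  haveI := uniform_prob h0 htop
  set Vr := (volume A).toReal with hVrdef
  have hVr : 0 < Vr := ENNReal.toReal_pos h0 htop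
  have hset : {ω : Fin n → ℝ×ℝ | ∀ i, ω i ∉ R} = Set.pi Set.univ (fun _ : Fin n => Rᶜ) := by
    ext ω; simp [Set.mem_pi]
  have hPR : ENNReal.ofReal (a / Vr) ≤ uniformOn A R := by
    rw [uniform_apply hR, Set.inter_eq_self_of_subset_left hRA]
    have hVA : volume A = ENNReal.ofReal Vr := (ENNReal.ofReal_toReal htop).symm
    rw [hVA, ← ENNReal.ofReal_inv_of_pos hVr]
    calc ENNReal.ofReal (a / Vr) = ENNReal.ofReal (Vr⁻¹ * a) := by rw [div_eq_inv_mul]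
      _ = ENNReal.ofReal Vr⁻¹ * ENNReal.ofReal a := ENNReal.ofReal_mul (by positivity)
      _ ≤ ENNReal.ofReal Vr⁻¹ * volume R := mul_le_mul_right haR _
  have haVr : a / Vr ≤ 1 := by
    have h1 : ENNReal.ofReal a ≤ ENNReal.ofReal Vr := by
      rw [ENNReal.ofReal_toReal htop]
      exact le_trans haR (measure_mono hRA)
    have := (ENNReal.ofReal_le_ofReal_iff hVr.le).1 h1
    rw [div_le_one hVr]
    exact this
  have hcompl : uniformOn A Rᶜ ≤ ENNReal.ofReal (Real.exp (-(a / Vr))) := by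
    rw [prob_compl_eq_one_sub hR]
    rw [tsub_le_iff_right]
    calc (1 : ℝ≥0∞) = ENNReal.ofReal (1 - a/Vr) + ENNReal.ofReal (a/Vr) := by
          rw [← ENNReal.ofReal_add (by linarith) (by positivity)]
          norm_num
      _ ≤ ENNReal.ofReal (Real.exp (-(a/Vr))) + uniformOn A R := by
          gcongr
          · linarith [Real.add_one_le_exp (-(a/Vr))]
  rw [hset, Measure.pi_pi]
  calc ∏ _i : Fin n, uniformOn A Rᶜ = (uniformOn A Rᶜ)^n := by
        rw [Finset.prod_const, Finset.card_univ, Fintype.card_fin]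
    _ ≤ (ENNReal.ofReal (Real.exp (-(a / Vr))))^n := pow_le_pow_left' hcompl n
    _ = ENNReal.ofReal (Real.exp (-(a / Vr)) ^ n) := by
        rw [ENNReal.ofReal_pow (Real.exp_nonneg _)]

lemma pi_hit_null {A : Set (ℝ×ℝ)} (h0 : volume A ≠ 0) (htop : volume A ≠ ⊤) (n : ℕ)
    {F : Set (ℝ×ℝ)} (hF : MeasurableSet F) (hF0 : volume F = 0) :
    (Measure.pi fun _ : Fin n => uniformOn A) {ω : Fin n → ℝ×ℝ | ∃ i, ω i ∈ F} = 0 := by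
  classical
  haveI := uniform_prob h0 htop
  have hPF : uniformOn A F = 0 := by
    rw [uniform_apply hF]
    have : volume (F ∩ A) = 0 := measure_mono_null Set.inter_subset_left hF0
    rw [this, mul_zero]
  have hsub : {ω : Fin n → ℝ×ℝ | ∃ i, ω i ∈ F} = ⋃ i, {ω : Fin n → ℝ×ℝ | ω i ∈ F} := by
    ext ω; simp
  rw [hsub]
  refine le_antisymm (le_trans (measure_iUnion_le _) ?_) zero_le
  have hone : ∀ i : Fin n, (Measure.pi fun _ : Fin n => uniformOn A) {ω : Fin n → ℝ×ℝ | ω i ∈ F} = 0 := by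
    intro i
    have hseteq : {ω : Fin n → ℝ×ℝ | ω i ∈ F} = Set.pi Set.univ (fun j => if j = i then F else Set.univ) := by
      ext ω
      simp only [Set.mem_pi, Set.mem_univ, forall_true_left, Set.mem_setOf_eq]
      constructor
      · intro hω j
        by_cases hj : j = i
        · subst hj; simp [hω]
        · simp [hj]
      · intro hω
        have := hω i
        simpa using this
    rw [hseteq, Measure.pi_pi]
    refine Finset.prod_eq_zero (Finset.mem_univ i) ?_
    simp [hPF]
  simp [hone]

lemma fin_cast_dist {k : ℕ} {a b : Fin k} (h : a ≠ b) : 1 ≤ |((a.1:ℝ)) - b.1| := by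
  have hab : a.1 ≠ b.1 := fun hc => h (Fin.ext hc)
  rcases lt_or_gt_of_ne hab with hlt | hgt
  · have : (a.1:ℝ) + 1 ≤ b.1 := by exact_mod_cast hlt
    rw [abs_sub_comm, abs_of_pos (by linarith)]
    linarith
  · have : (b.1:ℝ) + 1 ≤ a.1 := by exact_mod_cast hgt
    rw [abs_of_pos (by linarith)]
    linarith

lemma translateSet_open {C : Set (ℝ×ℝ)} (hC : IsOpen C) (x : ℝ×ℝ) :
    IsOpen (translateSet x C) := by
  have : translateSet x C = (fun w => w - x) ⁻¹' C := vadd_eq_preimage x C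
  rw [this]
  exact hC.preimage (by fun_prop)

lemma final_step {n : ℕ} (μ : Measure (Fin n → ℝ×ℝ)) [IsProbabilityMeasure μ]
    (E B : Set (Fin n → ℝ×ℝ)) {x : ℝ} (hx0 : 0 ≤ x) (hx1 : x ≤ 1)
    (hsub : ∀ ω, ω ∉ B → ω ∈ E) (hB : μ B ≤ ENNReal.ofReal x) :
    ENNReal.ofReal (1 - x) ≤ μ E := by
  have hEc : μ Eᶜ ≤ ENNReal.ofReal x := by
    refine le_trans (measure_mono ?_) hB
    intro ω hω
    by_contra hB'
    exact hω (hsub ω hB')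
  have h1 : (1:ℝ≥0∞) ≤ μ E + μ Eᶜ := by
    rw [← measure_univ (μ := μ), ← Set.union_compl_self E]
    exact measure_union_le _ _
  have h3 : ENNReal.ofReal (1-x) + ENNReal.ofReal x ≤ μ E + ENNReal.ofReal x := by
    rw [← ENNReal.ofReal_add (by linarith) hx0]
    have heq : 1 - x + x = 1 := by ring
    rw [heq, ENNReal.ofReal_one]
    exact le_trans h1 (add_le_add_right hEc _)
  exact (ENNReal.add_le_add_iff_right ENNReal.ofReal_ne_top).1 h3

theorem stmt18 (K : Set (ℝ × ℝ))
    (hKcomp : IsCompact K) (hKconv : Convex ℝ K) (hKint : (interior K).Nonempty)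
    (C : Set (ℝ × ℝ)) (hC : C = interior K)
    (A : Set (ℝ × ℝ)) (hA : IsCompact A) (h2C : (fun c => (2 : ℝ) • c) '' C ⊆ A)
    (t : ℝ) (ht : 0 < t) :
    ∃ γ : ℝ, 0 < γ ∧ ∀ n : ℕ, 2 ≤ n →
      ENNReal.ofReal (1 - (n : ℝ) ^ (-t)) ≤
        (Measure.pi fun _ : Fin n => uniformOn A)
          {ω : Fin n → ℝ × ℝ |
            γ * ((n : ℝ) / Real.log n) ^ 2 ≤ (rangeCountIn C A (Set.range ω) : ℝ)} := by
  classical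
  have hCopen : IsOpen C := by rw [hC]; exact isOpen_interior
  have hCconv : Convex ℝ C := by rw [hC]; exact hKconv.interior
  have hCne : C.Nonempty := by rw [hC]; exact hKint
  have hCbdd : Bornology.IsBounded C :=
    hKcomp.isBounded.subset (by rw [hC]; exact interior_subset)
  obtain ⟨p, hp⟩ := hCne
  obtain ⟨r, hr, hball⟩ := Metric.isOpen_iff.1 hCopen p hp
  have hsubA : ∀ x ∈ C, translateSet x C ⊆ A := by
    rintro x hx z ⟨c, hc, rfl⟩
    have hmid : (2⁻¹ : ℝ) • x + (2⁻¹ : ℝ) • c ∈ C :=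
      hCconv hx hc (by norm_num) (by norm_num) (by norm_num)
    refine h2C ⟨_, hmid, ?_⟩
    show (2:ℝ) • ((2⁻¹ : ℝ) • x + (2⁻¹ : ℝ) • c) = x + c
    rw [smul_add, smul_smul, smul_smul]
    norm_num
  have hApos' : 0 < volume A := by
    have hp2 : ((2:ℝ))⁻¹ • ((2:ℝ) • p) = p := by rw [smul_smul]; norm_num
    have hballA : Metric.ball ((2:ℝ) • p) r ⊆ A := by
      intro w hw
      refine h2C ⟨(2⁻¹ : ℝ) • w, hball ?_, ?_⟩
      swap
      · show (2:ℝ) • ((2⁻¹ : ℝ) • w) = w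
        rw [smul_smul]; norm_num
      rw [Metric.mem_ball] at hw ⊢
      calc dist ((2⁻¹:ℝ) • w) p = dist ((2⁻¹:ℝ) • w) ((2⁻¹:ℝ) • ((2:ℝ) • p)) := by rw [hp2]
        _ = ‖(2⁻¹:ℝ)‖ * dist w ((2:ℝ) • p) := dist_smul₀ _ _ _
        _ < r := by
            rw [Real.norm_eq_abs]
            have := dist_nonneg (x := w) (y := (2:ℝ) • p)
            rw [abs_of_pos (by norm_num : (0:ℝ) < 2⁻¹)]
            linarith
    exact lt_of_lt_of_le (Metric.measure_ball_pos volume _ hr) (measure_mono hballA)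
  have hApos : volume A ≠ 0 := hApos'.ne'
  have hAtop : volume A ≠ ⊤ := hA.measure_lt_top.ne
  haveI hprob := uniform_prob hApos hAtop
  set Vr := (volume A).toReal with hVrdef
  have hVr : 0 < Vr := ENNReal.toReal_pos hApos hAtop
  set s := r/2 with hsdef
  have hspos : 0 < s := by rw [hsdef]; linarith
  have hlog2 : 0 < Real.log 2 := Real.log_pos (by norm_num)
  set β := (t+6)*Vr/r + s/Real.log 2 + 1 with hβdef
  have hβpos : 0 < β := by positivity
  refine ⟨(s/(2*β))^2, by positivity, ?_⟩
  intro n hn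
  have hn0 : (0:ℝ) < n := by positivity
  have hn1 : (1:ℝ) < n := by
    have : (2:ℝ) ≤ n := by exact_mod_cast hn
    linarith
  have hln : (0:ℝ) < Real.log n := Real.log_pos hn1
  set Q : ℝ := (n:ℝ) / Real.log n with hQdef
  have hQpos : 0 < Q := by positivity
  set x0 : ℝ := s * n / (β * Real.log n) with hx0def
  have hx0pos : 0 < x0 := by positivity
  set m := ⌊x0⌋₊ with hmdef
  have hnt0 : (0:ℝ) ≤ (n:ℝ) ^ (-t) := Real.rpow_nonneg hn0.le _
  have hnt1 : (n:ℝ) ^ (-t) ≤ 1 :=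
    Real.rpow_le_one_of_one_le_of_nonpos hn1.le (by linarith)
  haveI : IsProbabilityMeasure (Measure.pi fun _ : Fin n => uniformOn A) := inferInstance
  set μ := Measure.pi fun _ : Fin n => uniformOn A with hμdef
  by_cases hm2 : 2 ≤ m
  · -- main case: grid of m × m translates
    have hmpos : 0 < m := by omega
    have hmR : (0:ℝ) < m := by exact_mod_cast hmpos
    set δ := s / m with hδdef
    have hδpos : 0 < δ := by positivity
    have hδr : δ ≤ r := by
      rw [hδdef, hsdef]
      rw [div_le_iff₀ hmR]
      have : (1:ℝ) ≤ m := by exact_mod_cast hmpos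
      nlinarith
    set xg : Fin m × Fin m → ℝ×ℝ := fun q => (p.1 + q.1.1 * δ, p.2 + q.2.1 * δ) with hxgdef
    have hcoord : ∀ k : Fin m, 0 ≤ (k.1:ℝ) * δ ∧ (k.1:ℝ) * δ < s := by
      intro k
      refine ⟨by positivity, ?_⟩
      have hk : (k.1:ℝ) < m := by exact_mod_cast k.isLt
      calc (k.1:ℝ) * δ < m * δ := mul_lt_mul_of_pos_right hk hδpos
        _ = s := by rw [hδdef]; field_simp
    have hxgC : ∀ q, xg q ∈ C := by
      intro q
      apply hball
      rw [Metric.mem_ball, Prod.dist_eq]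
      have h1 := hcoord q.1
      have h2 := hcoord q.2
      have e1 : dist (p.1 + (q.1.1:ℝ) * δ) p.1 < r := by
        rw [Real.dist_eq, add_sub_cancel_left, abs_of_nonneg h1.1]
        have : s = r/2 := hsdef
        linarith [h1.2]
      have e2 : dist (p.2 + (q.2.1:ℝ) * δ) p.2 < r := by
        rw [Real.dist_eq, add_sub_cancel_left, abs_of_nonneg h2.1]
        have : s = r/2 := hsdef
        linarith [h2.2]
      exact max_lt e1 e2
    have hxA : ∀ q, translateSet (xg q) C ⊆ A := fun q => hsubA _ (hxgC q)
    have hxginj : Function.Injective xg := by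
      intro q q' he
      have e1 : p.1 + (q.1.1:ℝ)*δ = p.1 + (q'.1.1:ℝ)*δ := congrArg Prod.fst he
      have e2 : p.2 + (q.2.1:ℝ)*δ = p.2 + (q'.2.1:ℝ)*δ := congrArg Prod.snd he
      have g1 : q.1 = q'.1 := by
        have h3 : (q.1.1:ℝ) * δ = (q'.1.1:ℝ) * δ := by linarith
        exact Fin.ext (by exact_mod_cast mul_right_cancel₀ hδpos.ne' h3)
      have g2 : q.2 = q'.2 := by
        have h3 : (q.2.1:ℝ) * δ = (q'.2.1:ℝ) * δ := by linarith
        exact Fin.ext (by exact_mod_cast mul_right_cancel₀ hδpos.ne' h3)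
      exact Prod.ext g1 g2
    have htransvadd : ∀ y : ℝ×ℝ, translateSet y C = y +ᵥ C := fun y => rfl
    have hRvol : ∀ q q' : Fin m × Fin m, q ≠ q' →
        ENNReal.ofReal (r*δ) ≤ volume (translateSet (xg q) C \ translateSet (xg q') C) := by
      intro q q' hne
      set v := xg q' - xg q with hvdef
      have hv : v ≠ 0 := by
        intro hcon
        exact hne (hxginj (sub_eq_zero.1 hcon)).symm
      have hv1 : v.1 = ((q'.1.1:ℝ) - q.1.1) * δ := by
        simp only [hvdef, hxgdef, Prod.fst_sub]
        ring
      have hv2 : v.2 = ((q'.2.1:ℝ) - q.2.1) * δ := by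
        simp only [hvdef, hxgdef, Prod.snd_sub]
        ring
      have hlv : δ^2 ≤ v.1^2 + v.2^2 := by
        have hor : q.1 ≠ q'.1 ∨ q.2 ≠ q'.2 := by
          by_contra hcc
          push_neg at hcc
          exact hne (Prod.ext hcc.1 hcc.2)
        rcases hor with h | h
        · have hd := fin_cast_dist (Ne.symm h)
          have : δ ≤ |v.1| := by
            rw [hv1, abs_mul, abs_of_pos hδpos]
            nlinarith [abs_nonneg ((q'.1.1:ℝ) - q.1.1)]
          nlinarith [sq_nonneg v.2, abs_nonneg v.1, sq_abs v.1]
        · have hd := fin_cast_dist (Ne.symm h)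
          have : δ ≤ |v.2| := by
            rw [hv2, abs_mul, abs_of_pos hδpos]
            nlinarith [abs_nonneg ((q'.2.1:ℝ) - q.2.1)]
          nlinarith [sq_nonneg v.1, abs_nonneg v.2, sq_abs v.2]
      have hshift : translateSet (xg q') C = (fun y => xg q + y) '' (v +ᵥ C) := by
        have h1 : (fun y => xg q + y) '' (v +ᵥ C) = xg q +ᵥ (v +ᵥ C) := rfl
        rw [htransvadd, h1, vadd_vadd]
        congr 1
        rw [hvdef]
        abel
      have hid : translateSet (xg q) C \ translateSet (xg q') C
          = (fun y => xg q + y) '' (C \ (v +ᵥ C)) := by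
        rw [Set.image_diff (add_right_injective (xg q)), hshift, translateSet]
      rw [hid]
      have himg : (fun y => xg q + y) '' (C \ (v +ᵥ C)) = xg q +ᵥ (C \ (v +ᵥ C)) := rfl
      rw [himg, measure_vadd]
      exact diff_lower hCconv hCopen hCbdd hr hball hv hδpos hlv hδr
    -- index bounds
    have hmx0 : (m:ℝ) ≤ x0 := Nat.floor_le hx0pos.le
    have hx0_2 : (2:ℝ) ≤ x0 := le_trans (by exact_mod_cast hm2) hmx0
    have hmge : x0/2 ≤ (m:ℝ) := by
      have := Nat.lt_floor_add_one x0
      push_cast at this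
      linarith
    have hβs : s/Real.log 2 ≤ β := by
      have hpos : 0 ≤ (t+6)*Vr/r := by positivity
      rw [hβdef]
      linarith
    have hβlog : s ≤ β * Real.log n := by
      have h2n : Real.log 2 ≤ Real.log n := by
        apply Real.log_le_log (by norm_num)
        exact_mod_cast hn
      calc s = (s/Real.log 2) * Real.log 2 := by field_simp
        _ ≤ β * Real.log n := by
            apply mul_le_mul hβs h2n hlog2.le hβpos.le
    have hx0n : x0 ≤ (n:ℝ) := by
      rw [hx0def, div_le_iff₀ (by positivity)]
      nlinarith
    have hmn : m ≤ n := by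
      have : (m:ℝ) ≤ (n:ℝ) := le_trans hmx0 hx0n
      exact_mod_cast this
    have hδlb : β * Real.log n / n ≤ δ := by
      have h1 : s / x0 ≤ s / m := div_le_div_of_nonneg_left hspos.le hmR hmx0
      have h2 : s / x0 = β * Real.log n / n := by
        rw [hx0def]
        field_simp
      rw [hδdef]
      linarith
    have hexp : (t+6) * Real.log n ≤ (n:ℝ) * (r*δ/Vr) := by
      have hβge : (t+6)*Vr/r ≤ β := by
        have hpos2 : 0 ≤ s/Real.log 2 := by positivity
        rw [hβdef]
        linarith
      have c2 : t+6 ≤ r*β/Vr := by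
        have : (t+6) = r*((t+6)*Vr/r)/Vr := by field_simp
        rw [this]
        gcongr
      calc (t+6) * Real.log n ≤ (r*β/Vr) * Real.log n :=
            mul_le_mul_of_nonneg_right c2 hln.le
        _ = (n:ℝ) * (r * (β * Real.log n / n) / Vr) := by field_simp
        _ ≤ (n:ℝ) * (r*δ/Vr) := by gcongr
    have hbound1 : Real.exp (-(r*δ/Vr))^n ≤ (n:ℝ)^(-(t+6)) := by
      rw [← Real.exp_nat_mul, Real.rpow_def_of_pos hn0]
      apply Real.exp_le_exp.2
      nlinarith
    set c1 : ℝ≥0∞ := ENNReal.ofReal (Real.exp (-(r*δ/Vr))^n) with hc1def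
    set bad1 := ⋃ (z : {z : (Fin m × Fin m) × (Fin m × Fin m) // z.1 ≠ z.2}),
      {ω : Fin n → ℝ×ℝ | ∀ i, ω i ∉ (translateSet (xg z.1.1) C \ translateSet (xg z.1.2) C)}
      with hbad1def
    set bad2 := ⋃ q : Fin m × Fin m,
      {ω : Fin n → ℝ×ℝ | ∃ i, ω i ∈ frontier (translateSet (xg q) C)} with hbad2def
    have hRmeas : ∀ q q' : Fin m × Fin m,
        MeasurableSet (translateSet (xg q) C \ translateSet (xg q') C) :=
      fun q q' => ((translateSet_open hCopen _).measurableSet).diff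
        (translateSet_open hCopen _).measurableSet
    have hbad1le : μ bad1 ≤ ((n^4 : ℕ) : ℝ≥0∞) * c1 := by
      refine le_trans (measure_iUnion_le _) ?_
      have heach : ∀ z : {z : (Fin m × Fin m) × (Fin m × Fin m) // z.1 ≠ z.2},
          μ {ω : Fin n → ℝ×ℝ | ∀ i, ω i ∉ (translateSet (xg z.1.1) C \ translateSet (xg z.1.2) C)} ≤ c1 := by
        intro z
        exact pi_miss hApos hAtop n (hRmeas _ _)
          (le_trans Set.diff_subset (hxA z.1.1)) (by positivity) (hRvol z.1.1 z.1.2 z.2)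
      calc ∑' z : {z : (Fin m × Fin m) × (Fin m × Fin m) // z.1 ≠ z.2},
            μ {ω : Fin n → ℝ×ℝ | ∀ i, ω i ∉ (translateSet (xg z.1.1) C \ translateSet (xg z.1.2) C)}
          ≤ ∑' _z : {z : (Fin m × Fin m) × (Fin m × Fin m) // z.1 ≠ z.2}, c1 :=
            ENNReal.tsum_le_tsum heach
        _ = (Fintype.card {z : (Fin m × Fin m) × (Fin m × Fin m) // z.1 ≠ z.2} : ℝ≥0∞) * c1 := by
            rw [tsum_fintype]
            rw [Finset.sum_const, Finset.card_univ, nsmul_eq_mul]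
        _ ≤ ((n^4 : ℕ) : ℝ≥0∞) * c1 := by
            apply mul_le_mul_left
            have hcard : Fintype.card {z : (Fin m × Fin m) × (Fin m × Fin m) // z.1 ≠ z.2} ≤ n^4 := by
              refine le_trans (Fintype.card_subtype_le _) ?_
              simp only [Fintype.card_prod, Fintype.card_fin]
              calc m*m*(m*m) ≤ n*n*(n*n) := by
                    exact Nat.mul_le_mul (Nat.mul_le_mul hmn hmn) (Nat.mul_le_mul hmn hmn)
                _ = n^4 := by ring
            exact_mod_cast hcard
    have hbad2le : μ bad2 = 0 := by
      refine le_antisymm (le_trans (measure_iUnion_le _) ?_) zero_le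
      have heach : ∀ q : Fin m × Fin m,
          μ {ω : Fin n → ℝ×ℝ | ∃ i, ω i ∈ frontier (translateSet (xg q) C)} = 0 := by
        intro q
        exact pi_hit_null hApos hAtop n isClosed_frontier.measurableSet
          ((hCconv.translate (xg q)).addHaar_frontier volume)
      simp [heach]
    refine final_step μ _ (bad1 ∪ bad2) hnt0 hnt1 ?_ ?_
    · intro ω hω
      have hωn1 : ω ∉ bad1 := fun h => hω (Set.mem_union_left _ h)
      have hωn2 : ω ∉ bad2 := fun h => hω (Set.mem_union_right _ h)
      have hfr : ∀ q i, ω i ∉ frontier (translateSet (xg q) C) := by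
        intro q i hcon
        exact hωn2 (Set.mem_iUnion.2 ⟨q, ⟨i, hcon⟩⟩)
      have hdiff : ∀ q q', q ≠ q' →
          ∃ i, ω i ∈ translateSet (xg q) C \ translateSet (xg q') C := by
        intro q q' hne
        by_contra hcon
        push_neg at hcon
        exact hωn1 (Set.mem_iUnion.2 ⟨⟨(q,q'), hne⟩, fun i => hcon i⟩)
      have hcount := count_lower C A xg ω hxA hfr hdiff
      show (s/(2*β))^2 * Q^2 ≤ _
      have hle : s*Q/(2*β) ≤ (m:ℝ) := by
        have heq : s*Q/(2*β) = x0/2 := by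
          rw [hx0def, hQdef]
          field_simp
        linarith
      have hnn : 0 ≤ s*Q/(2*β) := by positivity
      calc (s/(2*β))^2 * Q^2 = (s*Q/(2*β))^2 := by ring
        _ ≤ (m:ℝ)^2 := by nlinarith
        _ = ((m*m : ℕ):ℝ) := by push_cast; ring
        _ ≤ (rangeCountIn C A (Set.range ω) : ℝ) := by exact_mod_cast hcount
    · refine le_trans (measure_union_le _ _) ?_
      rw [hbad2le, add_zero]
      refine le_trans hbad1le ?_
      rw [hc1def, ← ENNReal.ofReal_natCast, ← ENNReal.ofReal_mul (by positivity)]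
      refine ENNReal.ofReal_le_ofReal ?_
      push_cast
      calc (n:ℝ)^4 * Real.exp (-(r*δ/Vr))^n ≤ (n:ℝ)^4 * (n:ℝ)^(-(t+6)) := by
            apply mul_le_mul_of_nonneg_left hbound1 (by positivity)
        _ = (n:ℝ)^((4:ℝ)) * (n:ℝ)^(-(t+6)) := by
            rw [← Real.rpow_natCast (n:ℝ) 4]
            norm_num
        _ = (n:ℝ)^((4:ℝ) + (-(t+6))) := (Real.rpow_add hn0 _ _).symm
        _ ≤ (n:ℝ)^(-t) := Real.rpow_le_rpow_of_exponent_le hn1.le (by linarith)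
  · -- small case : m ≤ 1, single translate suffices
    have hx0lt : x0 < 2 := by
      have : m < 2 := by omega
      have h2 := (Nat.floor_lt hx0pos.le).1 (by rw [← hmdef]; exact_mod_cast this)
      exact_mod_cast h2
    set bad := {ω : Fin n → ℝ×ℝ | ∃ i, ω i ∈ frontier (translateSet p C)} with hbaddef
    have hbadle : μ bad = 0 :=
      pi_hit_null hApos hAtop n isClosed_frontier.measurableSet
        ((hCconv.translate p).addHaar_frontier volume)
    refine final_step μ _ bad hnt0 hnt1 ?_ (by rw [hbadle]; positivity)
    intro ω hω
    have hfr : ∀ (q : Fin 1 × Fin 1) (i : Fin n),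
        ω i ∉ frontier (translateSet ((fun _ => p) q) C) := by
      intro q i hcon
      exact hω ⟨i, hcon⟩
    have hcount := count_lower C A (fun _ : Fin 1 × Fin 1 => p) ω
      (fun _ => hsubA p hp) hfr
      (fun q q' hne => absurd (by
        apply Prod.ext
        · exact Subsingleton.elim q.1 q'.1
        · exact Subsingleton.elim q.2 q'.2) hne)
    show (s/(2*β))^2 * Q^2 ≤ _
    have hQx0 : Q = β * x0 / s := by
      rw [hx0def, hQdef]
      field_simp
    have hgq : (s/(2*β))^2 * Q^2 ≤ 1 := by
      rw [hQx0]
      have heq : (s/(2*β))^2 * (β * x0 / s)^2 = (x0/2)^2 := by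
        field_simp
      rw [heq]
      nlinarith
    calc (s/(2*β))^2 * Q^2 ≤ 1 := hgq
      _ ≤ (rangeCountIn C A (Set.range ω) : ℝ) := by exact_mod_cast hcount
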